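/- Constrained symmetric Ekeland principle. In the abstract symmetrization framework, let X be a Banach space, G_j : X → ℝ (1 ≤ j ≤ m) functions of class C¹, 1 ≤ p ≤ m, and 𝒞 := {u ∈ X : G_j(u) = 0 for 1 ≤ j ≤ p and G_j(u) ≥ 0 for p+1 ≤ j ≤ m}; for u ∈ 𝒞 let ℐ(u) := {j : G_j(u) = 0}. Assume: f : X → ℝ is Fréchet differentiable with −∞ < inf_𝒞 f < +∞; for all u ∈ 𝒞 there exists ξ ∈ 𝒞 ∩ S with f(ξ) ≤ f(u); for all u ∈ 𝒞 the derivatives {dG_j(u)}_{j ∈ ℐ(u)} are linearly independent in X'; and for all u ∈ 𝒞 ∩ S and H ∈ ℋ*, u^H ∈ 𝒞 and f(u^H) ≤ f(u). Then for every ε > 0 there exist u_ε ∈ 𝒞 and λ_1, …, λ_m ∈ ℝ, with λ_j ≥ 0 for p+1 ≤ j ≤ m and λ_j = 0 whenever G_j(u_ε) ≠ 0, such that f(u_ε) ≤ inf_𝒞 f + ε², ‖u_ε − u_ε*‖_V < (K(C_Θ+1)+1)ε, and ‖df(u_ε) − Σ_{j=1}^m λ_j dG_j(u_ε)‖_{X'}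 ≤ ε. -/

import Mathlib

open Filter Topology Metric Set Pointwise

set_option maxHeartbeats 1000000

theorem my_ekeland {α : Type*} [MetricSpace α] [CompleteSpace α]
    (f : α → ℝ) (hf : Continuous f) (hbdd : BddBelow (Set.range f))
    {δ ρ : ℝ} (hδ : 0 < δ) (hρ : 0 < ρ) (w : α) (hw : f w ≤ sInf (Set.range f) + δ) :
    ∃ u : α, f u ≤ f w ∧ dist u w ≤ ρ ∧ ∀ v : α, f u ≤ f v + (δ / ρ) * dist v u := by
  obtain ⟨B, hB⟩ := hbdd
  set c := δ / ρ with hc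
  have hcpos : 0 < c := div_pos hδ hρ
  set rel : α → α → Prop := fun v u => f v + c * dist v u ≤ f u with hrel
  have hrefl : ∀ u, rel u u := by intro u; simp [hrel]
  have htrans : ∀ v u x, rel v u → rel u x → rel v x := by
    intro v u x h1 h2
    have : f v + c * dist v x ≤ f v + c * (dist v u + dist u x) := by
      have := dist_triangle v u x
      nlinarith
    simp only [hrel] at *
    nlinarith
  have hSb : ∀ u : α, BddBelow (f '' {x | rel x u}) := by
    intro u
    exact ⟨B, fun y ⟨x, _, hx⟩ => hx ▸ hB ⟨x, rfl⟩⟩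
  have hstep : ∀ (u : α) (n : ℕ), ∃ v, rel v u ∧
      f v ≤ sInf (f '' {x | rel x u}) + (1/2)^n := by
    intro u n
    have hne : (f '' {x | rel x u}).Nonempty := ⟨f u, u, hrefl u, rfl⟩
    have : sInf (f '' {x | rel x u}) < sInf (f '' {x | rel x u}) + (1/2)^n := by
      have : (0:ℝ) < (1/2)^n := by positivity
      linarith
    obtain ⟨y, ⟨x, hx, rfl⟩, hy⟩ := exists_lt_of_csInf_lt hne this
    exact ⟨x, hx, le_of_lt hy⟩
  choose next hnext1 hnext2 using hstep
  set seq : ℕ → α := fun n => Nat.rec w (fun k uk => next uk k) n with hseq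
  have hseq0 : seq 0 = w := rfl
  have hseqS : ∀ n, seq (n+1) = next (seq n) n := fun n => rfl
  have hsucc : ∀ n, rel (seq (n+1)) (seq n) := fun n => hnext1 (seq n) n
  have hchain : ∀ n k, rel (seq (n+k)) (seq n) := by
    intro n k
    induction k with
    | zero => exact hrefl _
    | succ k ih => exact htrans _ _ _ (hsucc (n+k)) ih
  have hanti : ∀ n k, n ≤ k → f (seq k) ≤ f (seq n) := by
    intro n k hnk
    obtain ⟨j, rfl⟩ := Nat.exists_eq_add_of_le hnk
    have := hchain n j
    have hd : 0 ≤ c * dist (seq (n+j)) (seq n) := by positivity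
    simp only [hrel] at this; linarith
  have hlow : ∀ n, B ≤ f (seq n) := fun n => hB ⟨seq n, rfl⟩
  have hbb : BddBelow (Set.range (fun n => f (seq n))) := ⟨B, fun y ⟨n, hn⟩ => hn ▸ hlow n⟩
  set L := ⨅ n, f (seq n) with hL
  have hLle : ∀ n, L ≤ f (seq n) := fun n => ciInf_le hbb n
  have hfL : Tendsto (fun n => f (seq n)) atTop (𝓝 L) :=
    tendsto_atTop_ciInf (fun a b hab => hanti a b hab) hbb
  have hcauchy : CauchySeq seq := by
    have key : ∀ a b : ℕ, a ≤ b → dist (seq b) (seq a) ≤ (f (seq a) - L) / c := by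
      intro a b hab
      obtain ⟨j, rfl⟩ := Nat.exists_eq_add_of_le hab
      have h1 := hchain a j
      simp only [hrel] at h1
      have h2 := hLle (a + j)
      rw [le_div_iff₀ hcpos]
      nlinarith [dist_nonneg (x := seq (a+j)) (y := seq a)]
    apply cauchySeq_of_le_tendsto_0 (fun N => (f (seq N) - L) / c)
    · intro n m N hn hm
      rcases le_total n m with h | h
      · calc dist (seq n) (seq m) = dist (seq m) (seq n) := dist_comm _ _
          _ ≤ (f (seq n) - L)/c := key n m h
          _ ≤ (f (seq N) - L)/c := by gcongr; exact hanti N n hn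
      · calc dist (seq n) (seq m) ≤ (f (seq m) - L)/c := key m n h
          _ ≤ (f (seq N) - L)/c := by gcongr; exact hanti N m hm
    · have : Tendsto (fun N => (f (seq N) - L) / c) atTop (𝓝 ((L - L)/c)) :=
        (hfL.sub tendsto_const_nhds).div_const c
      simpa using this
  obtain ⟨u, hu⟩ := cauchySeq_tendsto_of_complete hcauchy
  have hrelu : ∀ n, rel u (seq n) := by
    intro n
    have hconv : Tendsto (fun k => seq (k + n)) atTop (𝓝 u) := hu.comp (tendsto_add_atTop_nat n)
    have hconv' : Tendsto (fun k => f (seq (k+n)) + c * dist (seq (k+n)) (seq n)) atTop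
        (𝓝 (f u + c * dist u (seq n))) := by
      apply Tendsto.add
      · exact (hf.continuousAt.tendsto.comp hconv)
      · exact Tendsto.const_mul _ ((continuous_dist.comp (continuous_id.prodMk
          continuous_const)).continuousAt.tendsto.comp hconv)
    refine le_of_tendsto hconv' (Filter.Eventually.of_forall (fun k => ?_))
    have := hchain n k
    rwa [Nat.add_comm] at this
  have hfu_le : ∀ n, f u ≤ f (seq n) := by
    intro n
    have := hrelu n
    simp only [hrel] at this
    nlinarith [dist_nonneg (x := u) (y := seq n)]
  have hfuL : f u ≤ L := le_ciInf hfu_le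
  have hruw := hrelu 0
  rw [hseq0] at hruw
  simp only [hrel] at hruw
  refine ⟨u, ?_, ?_, ?_⟩
  · nlinarith [dist_nonneg (x := u) (y := w)]
  · have hBu : sInf (Set.range f) ≤ f u := csInf_le ⟨B, hB⟩ ⟨u, rfl⟩
    have : c * dist u w ≤ δ := by nlinarith
    rw [hc, div_mul_eq_mul_div, div_le_iff₀ hρ] at this
    have := (mul_le_mul_iff_right₀ hδ).mp this
    linarith
  · intro v
    by_contra hcon
    push_neg at hcon
    have hrelvu : rel v u := by simp only [hrel]; linarith
    have hge : f u ≤ f v := by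
      have h3 : ∀ n, f u ≤ f v + (1/2)^n := by
        intro n
        have hv : rel v (seq n) := htrans _ _ _ hrelvu (hrelu n)
        have : sInf (f '' {x | rel x (seq n)}) ≤ f v := csInf_le (hSb _) ⟨v, hv, rfl⟩
        have h4 := hnext2 (seq n) n
        rw [← hseqS n] at h4
        exact le_trans (hfu_le (n+1)) (le_trans h4 (by linarith))
      have : Tendsto (fun n : ℕ => f v + (1/2:ℝ)^n) atTop (𝓝 (f v + 0)) :=
        tendsto_const_nhds.add (tendsto_pow_atTop_nhds_zero_of_lt_one (by norm_num) (by norm_num))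
      rw [add_zero] at this
      exact ge_of_tendsto this (Filter.Eventually.of_forall h3)
    nlinarith [dist_nonneg (x := v) (y := u)]

theorem exists_dual_family {X : Type*} [NormedAddCommGroup X] [NormedSpace ℝ X]
    {ι : Type*} [Fintype ι] [DecidableEq ι] (L : ι → X →L[ℝ] ℝ)
    (hL : LinearIndependent ℝ L) :
    ∃ R : ι → X, ∀ i j, L j (R i) = if j = i then 1 else 0 := by
  set T : X →ₗ[ℝ] (ι → ℝ) := LinearMap.pi (fun i => (L i : X →ₗ[ℝ] ℝ)) with hT
  have hsurj : LinearMap.range T = ⊤ := by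
    by_contra hne
    have hlt : LinearMap.range T < ⊤ := lt_top_iff_ne_top.mpr hne
    obtain ⟨g, hg0, hgmap⟩ := Submodule.exists_dual_map_eq_bot_of_lt_top hlt inferInstance
    set c : ι → ℝ := fun i => g (fun j => if i = j then 1 else 0) with hc
    have hgx : ∀ y : ι → ℝ, g y = ∑ i, y i * c i := by
      intro y
      rw [LinearMap.pi_apply_eq_sum_univ g y]
      simp [hc, smul_eq_mul]
    have hzero : ∀ x : X, ∑ i, c i * L i x = 0 := by
      intro x
      have hmem : T x ∈ LinearMap.range T := ⟨x, rfl⟩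
      have : g (T x) = 0 := by
        have := hgmap ▸ Submodule.mem_map_of_mem (f := g) hmem
        simpa using this
      rw [hgx] at this
      simpa [mul_comm, hT] using this
    have hcsum : ∑ i, c i • L i = 0 := by
      ext x
      simpa using hzero x
    have hc0 : ∀ i, c i = 0 := Fintype.linearIndependent_iff.mp hL c hcsum
    apply hg0
    apply LinearMap.ext
    intro y
    rw [hgx]
    simp [hc0]
  have hexists : ∀ i : ι, ∃ x : X, T x = Pi.single i 1 := by
    intro i
    have : Pi.single i 1 ∈ LinearMap.range T := hsurj ▸ Submodule.mem_top
    exact this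
  choose R hR using hexists
  refine ⟨R, fun i j => ?_⟩
  have := congrFun (hR i) j
  simp only [hT, LinearMap.pi_apply, ContinuousLinearMap.coe_coe] at this
  rw [this, Pi.single_apply]

theorem farkas_eps {X : Type*} [NormedAddCommGroup X] [NormedSpace ℝ X]
    {ι : Type*} [Fintype ι] [DecidableEq ι]
    (L : ι → X →L[ℝ] ℝ) (R : ι → X) (hR : ∀ i j, L j (R i) = if j = i then 1 else 0)
    (φ : X →L[ℝ] ℝ) (A : ι → Prop) [DecidablePred A] {ε e : ℝ} (hε : 0 ≤ ε) (he : ε < e)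
    (hcone : ∀ h : X, (∀ i, ¬ A i → L i h = 0) → (∀ i, A i → 0 ≤ L i h) → -(ε * ‖h‖) ≤ φ h) :
    ∃ lam : ι → ℝ, (∀ i, A i → 0 ≤ lam i) ∧ ‖φ - ∑ i, lam i • L i‖ ≤ e := by
  classical
  set v : (ι → ℝ) → ℝ := fun y => ∑ i, if A i then max (y i) 0 else |y i| with hv
  have hvterm : ∀ (y : ι → ℝ) (i : ι), 0 ≤ if A i then max (y i) 0 else |y i| := by
    intro y i
    by_cases hAi : A i <;> simp [hAi, le_max_right, abs_nonneg]
  have hv0 : ∀ y, 0 ≤ v y := fun y => Finset.sum_nonneg fun i _ => hvterm y i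
  have hvzero : v 0 = 0 := by simp [hv]
  have hvcont : Continuous v := by
    apply continuous_finset_sum
    intro i _
    by_cases hAi : A i
    · simp only [hAi, if_true]
      exact (continuous_apply i).max continuous_const
    · simp only [hAi, if_false]
      exact (continuous_apply i).abs
  set C₀ : Set (ι → ℝ) := {c | (∀ i, ¬ A i → c i = 0) ∧ (∀ i, A i → 0 ≤ c i)} with hC₀
  have hvmono : ∀ y c, c ∈ C₀ → v y ≤ v (y + c) := by
    intro y c hc
    apply Finset.sum_le_sum
    intro i _
    by_cases hAi : A i
    · simp only [hAi, if_true, Pi.add_apply]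
      exact max_le_max (by linarith [hc.2 i hAi]) le_rfl
    · simp [hAi, Pi.add_apply, hc.1 i hAi]
  -- robust estimate
  set M : ℝ := (ε + ‖φ‖) * ∑ i, ‖R i‖ with hM
  have hM0 : 0 ≤ M := by
    apply mul_nonneg (by positivity)
    exact Finset.sum_nonneg fun i _ => norm_nonneg _
  have hrobust : ∀ h : X, ‖h‖ ≤ 1 → φ h ≤ ε + M * v (fun i => L i h) := by
    intro h hh
    set α : ι → ℝ := fun i => if A i then max (L i h) 0 else L i h with hα
    set h' : X := h - ∑ i, α i • R i with hh'
    have hLh' : ∀ j, L j h' = L j h - α j := by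
      intro j
      simp only [hh', map_sub, map_sum, map_smul]
      have : ∑ i, α i • (L j) (R i) = α j := by
        rw [Finset.sum_eq_single j]
        · rw [hR j j]; simp
        · intro i _ hij; rw [hR i j, if_neg (Ne.symm hij)]; simp
        · intro hj; exact absurd (Finset.mem_univ j) hj
      rw [this]
    have hcone' : -(ε * ‖-h'‖) ≤ φ (-h') := by
      apply hcone
      · intro i hAi
        rw [map_neg, hLh' i, hα]
        simp [hAi]
      · intro i hAi
        rw [map_neg, hLh' i, hα]
        simp only [hAi, if_true]
        have := le_max_left (L i h) 0
        linarith
    have hφh' : φ h' ≤ ε * ‖h'‖ := by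
      rw [map_neg, norm_neg] at hcone'
      linarith
    have hαv : ∀ i, |α i| ≤ v (fun i => L i h) := by
      intro i
      have h1 : |α i| = (if A i then max ((fun i => L i h) i) 0 else |(fun i => L i h) i|) := by
        by_cases hAi : A i
        · simp only [hα, hAi, if_true]
          exact abs_of_nonneg (le_max_right _ _)
        · simp [hα, hAi]
      rw [h1]
      have h2 := Finset.single_le_sum (f := fun j => if A j then max ((L j) h) 0 else |(L j) h|)
        (fun j _ => hvterm (fun i => L i h) j) (Finset.mem_univ i)
      simpa [hv] using h2
    have hsum_bound : ‖∑ i, α i • R i‖ ≤ (∑ i, ‖R i‖) * v (fun i => L i h) := by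
      calc ‖∑ i, α i • R i‖ ≤ ∑ i, ‖α i • R i‖ := norm_sum_le _ _
        _ = ∑ i, |α i| * ‖R i‖ := by simp [norm_smul]
        _ ≤ ∑ i, v (fun i => L i h) * ‖R i‖ := by
            apply Finset.sum_le_sum
            intro i _
            exact mul_le_mul_of_nonneg_right (hαv i) (norm_nonneg _)
        _ = (∑ i, ‖R i‖) * v (fun i => L i h) := by rw [← Finset.mul_sum, mul_comm]
    have hφsum : φ (∑ i, α i • R i) ≤ ‖φ‖ * ((∑ i, ‖R i‖) * v (fun i => L i h)) := by
      calc φ (∑ i, α i • R i) ≤ |φ (∑ i, α i • R i)| := le_abs_self _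
        _ ≤ ‖φ‖ * ‖∑ i, α i • R i‖ := φ.le_opNorm _
        _ ≤ ‖φ‖ * ((∑ i, ‖R i‖) * v (fun i => L i h)) :=
            mul_le_mul_of_nonneg_left hsum_bound (norm_nonneg _)
    have hnh' : ‖h'‖ ≤ ‖h‖ + (∑ i, ‖R i‖) * v (fun i => L i h) := by
      calc ‖h'‖ ≤ ‖h‖ + ‖∑ i, α i • R i‖ := norm_sub_le _ _
        _ ≤ _ := by linarith
    have hφdecomp : φ h = φ h' + φ (∑ i, α i • R i) := by
      rw [hh', map_sub]; ring
    have hvnn := hv0 (fun i => L i h)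
    calc φ h = φ h' + φ (∑ i, α i • R i) := hφdecomp
      _ ≤ ε * ‖h'‖ + ‖φ‖ * ((∑ i, ‖R i‖) * v (fun i => L i h)) := by linarith
      _ ≤ ε * (‖h‖ + (∑ i, ‖R i‖) * v (fun i => L i h))
          + ‖φ‖ * ((∑ i, ‖R i‖) * v (fun i => L i h)) := by nlinarith
      _ ≤ ε + M * v (fun i => L i h) := by
          rw [hM]
          have hεh : ε * ‖h‖ ≤ ε := by nlinarith
          nlinarith [Finset.sum_nonneg (fun i (_ : i ∈ Finset.univ) => norm_nonneg (R i))]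
  -- separation part
  set clm : X →L[ℝ] ((ι → ℝ) × ℝ) := (ContinuousLinearMap.pi L).prod φ with hclm
  have hclmh : ∀ h : X, clm h = (fun i => L i h, φ h) := by
    intro h; rfl
  set D : Set ((ι → ℝ) × ℝ) := clm '' closedBall 0 1 with hD
  set KK : Set ((ι → ℝ) × ℝ) := {z : ((ι → ℝ) × ℝ) | z.1 ∈ C₀ ∧ z.2 ≤ 0} with hKK
  have hDconv : Convex ℝ D := (convex_closedBall (0:X) 1).linear_image clm.toLinearMap
  have hKconv : Convex ℝ KK := by
    intro z1 hz1 z2 hz2 a b ha hb hab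
    refine ⟨⟨fun i hAi => ?_, fun i hAi => ?_⟩, ?_⟩
    · show a * z1.1 i + b * z2.1 i = 0
      rw [hz1.1.1 i hAi, hz2.1.1 i hAi]; ring
    · show 0 ≤ a * z1.1 i + b * z2.1 i
      have := hz1.1.2 i hAi; have := hz2.1.2 i hAi
      positivity
    · show a * z1.2 + b * z2.2 ≤ 0
      have h1 := hz1.2; have h2 := hz2.2
      nlinarith
  have hQconv : Convex ℝ (closure (D + KK)) := (hDconv.add hKconv).closure
  have hQsub : closure (D + KK) ⊆ {z : ((ι → ℝ) × ℝ) | z.2 ≤ ε + M * v z.1} := by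
    apply closure_minimal
    · rintro z hz
      rw [Set.mem_add] at hz
      obtain ⟨d, hd, k, hk, rfl⟩ := hz
      obtain ⟨h, hh, rfl⟩ := hd
      rw [mem_closedBall_zero_iff] at hh
      have h1 : φ h ≤ ε + M * v (fun i => L i h) := hrobust h hh
      have h2 : v (fun i => L i h) ≤ v ((fun i => L i h) + k.1) := hvmono _ _ hk.1
      have h3 : (clm h + k).2 = φ h + k.2 := by rw [hclmh]; rfl
      have h4 : (clm h + k).1 = (fun i => L i h) + k.1 := by rw [hclmh]; rfl
      have h5 : M * v (fun i => L i h) ≤ M * v ((fun i => L i h) + k.1) :=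
        mul_le_mul_of_nonneg_left h2 hM0
      show (clm h + k).2 ≤ ε + M * v (clm h + k).1
      rw [h3, h4]
      linarith [hk.2]
    · have : Continuous fun z : ((ι → ℝ) × ℝ) => ε + M * v z.1 :=
        continuous_const.add (continuous_const.mul (hvcont.comp continuous_fst))
      exact isClosed_le continuous_snd this
  have hepos : 0 < e := lt_of_le_of_lt hε he
  have hnotin : ((0 : ι → ℝ), e) ∉ closure (D + KK) := by
    intro hmem
    have := hQsub hmem
    simp only [Set.mem_setOf_eq, hvzero] at this
    simp at this
    linarith
  obtain ⟨ℓ, u, hul, hue⟩ :=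
    geometric_hahn_banach_closed_point hQconv isClosed_closure hnotin
  have hlt : ∀ z ∈ D + KK, ℓ z < u := fun z hz => hul z (subset_closure hz)
  have hzeroKK : ((0 : ι → ℝ), (0:ℝ)) ∈ KK := by
    refine ⟨⟨fun i _ => rfl, fun i _ => le_rfl⟩, le_rfl⟩
  have hclm0D : clm 0 ∈ D := ⟨0, by simp, rfl⟩
  have hKKmem : ∀ z ∈ KK, z ∈ D + KK := by
    intro z hz
    have : clm 0 + z ∈ D + KK := Set.add_mem_add hclm0D hz
    simpa using this
  have hupos : 0 < u := by
    have := hlt _ (hKKmem _ hzeroKK)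
    simpa [Prod.mk_zero_zero] using this
  set β : ℝ := ℓ ((0 : ι → ℝ), (1:ℝ)) with hβ
  have hℓst : ∀ (s : ℝ), ℓ ((0 : ι → ℝ), s) = s * β := by
    intro s
    have : ((0 : ι → ℝ), s) = s • ((0 : ι → ℝ), (1:ℝ)) := by simp
    rw [this, map_smul, smul_eq_mul, hβ]
  have hβnonneg : 0 ≤ β := by
    by_contra hneg
    push_neg at hneg
    set s : ℝ := (u + 1) / (-β) with hs
    have hs0 : 0 ≤ s := div_nonneg (by linarith) (by linarith)
    have hmem : ((0 : ι → ℝ), -s) ∈ KK := ⟨⟨fun i _ => rfl, fun i _ => le_rfl⟩, by show -s ≤ 0; linarith⟩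
    have := hlt _ (hKKmem _ hmem)
    rw [hℓst] at this
    have hsβ : -s * β = u + 1 := by
      have hb : -β ≠ 0 := by linarith
      calc -s * β = (u + 1) / -β * -β := by rw [hs]; ring
        _ = u + 1 := div_mul_cancel₀ _ hb
    linarith
  have hβe : u < e * β := by
    have := hue
    rw [hℓst] at this
    linarith
  have hβpos : 0 < β := by
    rcases lt_or_eq_of_le hβnonneg with h | h
    · exact h
    · exfalso; rw [← h] at hβe; simp at hβe; linarith
  set ℓ₁ : (ι → ℝ) →L[ℝ] ℝ := ℓ.comp (ContinuousLinearMap.inl ℝ (ι → ℝ) ℝ) with hℓ₁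
  have hℓ₁app : ∀ y : ι → ℝ, ℓ₁ y = ℓ (y, 0) := fun y => rfl
  have hsplit : ∀ (y : ι → ℝ) (t : ℝ), ℓ (y, t) = ℓ₁ y + t * β := by
    intro y t
    have : (y, t) = (y, (0:ℝ)) + t • ((0 : ι → ℝ), (1:ℝ)) := by simp
    rw [this, map_add, map_smul, smul_eq_mul, hℓ₁app, hβ]
  have hC₀le : ∀ c ∈ C₀, ℓ₁ c ≤ 0 := by
    intro c hc
    by_contra hpos
    push_neg at hpos
    set t : ℝ := (u + 1) / ℓ₁ c with ht
    have ht0 : 0 ≤ t := div_nonneg (by linarith) (by linarith)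
    have htc : t • c ∈ C₀ := by
      refine ⟨fun i hAi => ?_, fun i hAi => ?_⟩
      · simp [hc.1 i hAi]
      · simp only [Pi.smul_apply, smul_eq_mul]
        exact mul_nonneg ht0 (hc.2 i hAi)
    have hmem : ((t • c : ι → ℝ), (0:ℝ)) ∈ KK := ⟨htc, le_rfl⟩
    have h1 := hlt _ (hKKmem _ hmem)
    rw [← hℓ₁app, map_smul, smul_eq_mul] at h1
    have : t * ℓ₁ c = u + 1 := by
      have hb : ℓ₁ c ≠ 0 := ne_of_gt hpos
      calc t * ℓ₁ c = (u + 1) / ℓ₁ c * ℓ₁ c := by rw [ht]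
        _ = u + 1 := div_mul_cancel₀ _ hb
    linarith
  set μ : ι → ℝ := fun i => ℓ₁ (fun j => if i = j then 1 else 0) with hμ
  have hμA : ∀ i, A i → μ i ≤ 0 := by
    intro i hAi
    apply hC₀le
    refine ⟨fun j hAj => ?_, fun j _ => ?_⟩
    · by_cases hij : i = j
      · exact absurd (hij ▸ hAi) hAj
      · simp [hij]
    · by_cases hij : i = j <;> simp [hij]
  have hℓ₁sum : ∀ y : ι → ℝ, ℓ₁ y = ∑ i, y i * μ i := by
    intro y
    rw [show (ℓ₁ : (ι → ℝ) → ℝ) y = (ℓ₁ : (ι → ℝ) →ₗ[ℝ] ℝ) y from rfl,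
      LinearMap.pi_apply_eq_sum_univ]
    simp [hμ, smul_eq_mul]
  set lam : ι → ℝ := fun i => -μ i / β with hlam
  have hlamA : ∀ i, A i → 0 ≤ lam i := by
    intro i hAi
    exact div_nonneg (by linarith [hμA i hAi]) (le_of_lt hβpos)
  refine ⟨lam, hlamA, ?_⟩
  set g : X →L[ℝ] ℝ := φ - ∑ i, lam i • L i with hg
  have hgh : ∀ h : X, ‖h‖ ≤ 1 → g h < e := by
    intro h hh
    have hmemD : clm h ∈ D := ⟨h, mem_closedBall_zero_iff.mpr hh, rfl⟩
    have h1 : ℓ (clm h) < u := by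
      have : clm h + ((0 : ι → ℝ), (0:ℝ)) ∈ D + KK := Set.add_mem_add hmemD hzeroKK
      simpa using hlt _ (by simpa [Prod.mk_zero_zero] using this)
    have h2 : ℓ (clm h) = ∑ i, (L i h) * μ i + φ h * β := by
      rw [hclmh, hsplit, hℓ₁sum]
    have h3 : g h * β = φ h * β + ∑ i, (L i h) * μ i := by
      have hga : g h = φ h - ∑ i, lam i * (L i h) := by
        simp [hg, ContinuousLinearMap.sum_apply, ContinuousLinearMap.smul_apply, smul_eq_mul]
      rw [hga, sub_mul, Finset.sum_mul]
      have : ∀ i, lam i * (L i h) * β = -((L i h) * μ i) := by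
        intro i
        have hb : β ≠ 0 := ne_of_gt hβpos
        calc lam i * (L i h) * β = -μ i * (L i h) * (β / β) := by rw [hlam]; ring
          _ = -((L i h) * μ i) := by rw [div_self hb]; ring
      rw [Finset.sum_congr rfl (fun i _ => this i), Finset.sum_neg_distrib]
      ring
    have h4 : g h * β < e * β := by
      rw [h3]; rw [h2] at h1; linarith
    exact lt_of_mul_lt_mul_right h4 hβpos.le
  apply ContinuousLinearMap.opNorm_le_bound _ (le_of_lt hepos)
  intro x
  rcases eq_or_ne x 0 with rfl | hx
  · simp
  have hnx : 0 < ‖x‖ := norm_pos_iff.mpr hx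
  set y : X := ‖x‖⁻¹ • x with hy
  have hny : ‖y‖ ≤ 1 := by
    rw [hy, norm_smul, norm_inv, norm_norm, inv_mul_cancel₀ (ne_of_gt hnx)]
  have h5 : g y < e := hgh y hny
  have h6 : -e < g y := by
    have := hgh (-y) (by rwa [norm_neg])
    rw [map_neg] at this
    linarith
  have h7 : |g y| ≤ e := by
    rw [abs_le]; constructor <;> linarith
  have h8 : g y = ‖x‖⁻¹ * g x := by rw [hy, map_smul, smul_eq_mul]
  rw [h8, abs_mul, abs_inv, abs_norm] at h7
  calc |g x| = ‖x‖ * (‖x‖⁻¹ * |g x|) := by field_simp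
    _ ≤ ‖x‖ * e := by
        apply mul_le_mul_of_nonneg_left _ (le_of_lt hnx)
        exact h7
    _ = e * ‖x‖ := mul_comm _ _

theorem curve_exists {X : Type*} [NormedAddCommGroup X] [NormedSpace ℝ X] [CompleteSpace X]
    {ι : Type*} [Fintype ι] [DecidableEq ι]
    (Φ : ι → X → ℝ) (hΦ : ∀ i, ContDiff ℝ 1 (Φ i)) (a : X) (hΦa : ∀ i, Φ i a = 0)
    (R : ι → X) (hR : ∀ i j, fderiv ℝ (Φ j) a (R i) = if j = i then 1 else 0) (h : X) :
    ∃ u : ℝ → X, u 0 = a ∧ HasDerivAt u h 0 ∧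
      ∀ᶠ t in 𝓝 (0:ℝ), ∀ i, Φ i (u t) = t * fderiv ℝ (Φ i) a h := by
  classical
  set L : ι → X →L[ℝ] ℝ := fun i => fderiv ℝ (Φ i) a with hL
  set T : X →L[ℝ] (ι → ℝ) := ContinuousLinearMap.pi L with hT
  set Rl : (ι → ℝ) →L[ℝ] X :=
    ∑ i, (ContinuousLinearMap.proj i).smulRight (R i) with hRl
  have hRlapp : ∀ y : ι → ℝ, Rl y = ∑ i, y i • R i := by
    intro y
    rw [hRl, ContinuousLinearMap.sum_apply]
    rfl
  have hTRl : ∀ y : ι → ℝ, T (Rl y) = y := by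
    intro y
    funext j
    rw [hRlapp]
    show L j (∑ i, y i • R i) = y j
    rw [map_sum]
    rw [Finset.sum_eq_single j]
    · rw [map_smul, smul_eq_mul]
      have := hR j j
      rw [hL]
      simp only [ContinuousLinearMap.coe_smul', Pi.smul_apply]
      rw [show (fderiv ℝ (Φ j) a) (R j) = 1 by rw [hR j j]; simp]
      simp
    · intro i _ hij
      rw [map_smul, smul_eq_mul, hL]
      rw [show (fderiv ℝ (Φ j) a) (R i) = 0 by rw [hR i j, if_neg (Ne.symm hij)]]
      simp
    · intro hj; exact absurd (Finset.mem_univ j) hj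
  set π : X →L[ℝ] X := ContinuousLinearMap.id ℝ X - Rl.comp T with hπ
  have hπapp : ∀ x, π x = x - Rl (T x) := fun x => rfl
  have hπker : ∀ x, π x ∈ LinearMap.ker (T : X →ₗ[ℝ] (ι → ℝ)) := by
    intro x
    rw [LinearMap.mem_ker]
    show T (π x) = 0
    rw [hπapp, map_sub, hTRl]
    simp
  set πc : X →L[ℝ] ↥(LinearMap.ker (T : X →ₗ[ℝ] (ι → ℝ))) := π.codRestrict (LinearMap.ker (T : X →ₗ[ℝ] (ι → ℝ))) hπker with hπc
  set F' : X →L[ℝ] (ι → ℝ) × ↥(LinearMap.ker (T : X →ₗ[ℝ] (ι → ℝ))) := T.prod πc with hF'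
  set Finv : ((ι → ℝ) × ↥(LinearMap.ker (T : X →ₗ[ℝ] (ι → ℝ)))) →L[ℝ] X :=
    Rl.comp (ContinuousLinearMap.fst ℝ _ _) +
      (LinearMap.ker (T : X →ₗ[ℝ] (ι → ℝ))).subtypeL.comp (ContinuousLinearMap.snd ℝ _ _) with hFinv
  have hFinvapp : ∀ z : (ι → ℝ) × ↥(LinearMap.ker (T : X →ₗ[ℝ] (ι → ℝ))), Finv z = Rl z.1 + ↑z.2 := fun z => rfl
  have h1 : ∀ x : X, Finv (F' x) = x := by
    intro x
    rw [hFinvapp]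
    show Rl (T x) + π x = x
    rw [hπapp]
    abel
  have h2 : ∀ z, F' (Finv z) = z := by
    intro z
    rw [hFinvapp]
    apply Prod.ext
    · show T (Rl z.1 + ↑z.2) = z.1
      rw [map_add, hTRl]
      have : T ↑z.2 = 0 := LinearMap.mem_ker.mp z.2.2
      rw [this, add_zero]
    · apply Subtype.ext
      show π (Rl z.1 + ↑z.2) = ↑z.2
      rw [hπapp, map_add, hTRl]
      have : T ↑z.2 = 0 := LinearMap.mem_ker.mp z.2.2
      rw [this, add_zero]
      abel
  set E := ContinuousLinearEquiv.equivOfInverse F' Finv h1 h2 with hE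
  set Fm : X → (ι → ℝ) × ↥(LinearMap.ker (T : X →ₗ[ℝ] (ι → ℝ))) := fun x => (fun i => Φ i x, πc x) with hFm
  have hstrict : HasStrictFDerivAt Fm (E : X →L[ℝ] (ι → ℝ) × ↥(LinearMap.ker (T : X →ₗ[ℝ] (ι → ℝ)))) a := by
    have hcoe : (E : X →L[ℝ] (ι → ℝ) × ↥(LinearMap.ker (T : X →ₗ[ℝ] (ι → ℝ)))) = F' := rfl
    rw [hcoe]
    apply HasStrictFDerivAt.prodMk
    · apply hasStrictFDerivAt_pi'.mpr
      intro i
      have hi : HasStrictFDerivAt (Φ i) (fderiv ℝ (Φ i) a) a :=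
        ((hΦ i).contDiffAt).hasStrictFDerivAt one_ne_zero
      have : (ContinuousLinearMap.proj i).comp T = L i := by
        apply ContinuousLinearMap.ext; intro x; rfl
      rw [this]
      exact hi
    · exact πc.hasStrictFDerivAt
  set g := hstrict.localInverse Fm E a with hg
  set γ : ℝ → (ι → ℝ) × ↥(LinearMap.ker (T : X →ₗ[ℝ] (ι → ℝ))) :=
    fun t => (fun i => t * L i h, πc a + t • πc h) with hγ
  have hγ0 : γ 0 = Fm a := by
    rw [hγ, hFm]
    apply Prod.ext
    · funext i
      show (0:ℝ) * L i h = Φ i a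
      rw [hΦa i, zero_mul]
    · show πc a + (0:ℝ) • πc h = πc a
      rw [zero_smul, add_zero]
  have hγd : HasDerivAt γ (fun i => L i h, πc h) 0 := by
    apply HasDerivAt.prodMk
    · apply hasDerivAt_pi.mpr
      intro i
      exact hasDerivAt_mul_const (L i h)
    · have : HasDerivAt (fun t : ℝ => t • πc h) ((1:ℝ) • πc h) 0 :=
        (hasDerivAt_id (0:ℝ)).smul_const (πc h)
      rw [one_smul] at this
      exact this.const_add (πc a)
  refine ⟨fun t => g (γ t), ?_, ?_, ?_⟩
  · show g (γ 0) = a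
    rw [hγ0]
    exact hstrict.localInverse_apply_image
  · have hgd : HasStrictFDerivAt g (E.symm : ((ι → ℝ) × ↥(LinearMap.ker (T : X →ₗ[ℝ] (ι → ℝ)))) →L[ℝ] X) (Fm a) :=
      hstrict.to_localInverse
    have hval : (E.symm : ((ι → ℝ) × ↥(LinearMap.ker (T : X →ₗ[ℝ] (ι → ℝ)))) →L[ℝ] X) (fun i => L i h, πc h) = h := by
      have hsy : (E.symm : ((ι → ℝ) × ↥(LinearMap.ker (T : X →ₗ[ℝ] (ι → ℝ)))) →L[ℝ] X) (fun i => L i h, πc h) = Finv (fun i => L i h, πc h) := rfl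
      rw [hsy, hFinvapp]
      show Rl (T h) + π h = h
      rw [hπapp]
      abel
    have hfd : HasFDerivAt g (E.symm : ((ι → ℝ) × ↥(LinearMap.ker (T : X →ₗ[ℝ] (ι → ℝ)))) →L[ℝ] X) (γ 0) := by
      rw [hγ0]; exact hgd.hasFDerivAt
    have hcomp := hfd.comp_hasDerivAt 0 hγd
    rw [hval] at hcomp
    exact hcomp
  · have hre := hstrict.eventually_right_inverse
    have hγt : Tendsto γ (𝓝 0) (𝓝 (Fm a)) := by
      have := hγd.continuousAt.tendsto
      rwa [hγ0] at this
    have hev : ∀ᶠ t in 𝓝 (0:ℝ), Fm (g (γ t)) = γ t := hγt.eventually hre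
    refine hev.mono fun t ht i => ?_
    have := congrFun (congrArg Prod.fst ht) i
    exact this


theorem constrained_symmetric_ekeland
    {X : Type*} [NormedAddCommGroup X] [NormedSpace ℝ X] [CompleteSpace X]
    {V : Type*} [NormedAddCommGroup V] [NormedSpace ℝ V] [CompleteSpace V]
    {W : Type*} [NormedAddCommGroup W] [NormedSpace ℝ W] [CompleteSpace W]
    (ι : X →L[ℝ] V) (κ : V →L[ℝ] W)
    (K : ℝ) (hK : 0 < K) (hιK : ∀ u : X, ‖ι u‖ ≤ K * ‖u‖)
    (S : Set X)
    {P : Type*} [TopologicalSpace P] [PathConnectedSpace P]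
    (pol : X → P → X) (sy : X → X)
    (hpolS : ∀ u ∈ S, ∀ H : P, pol u H ∈ S)
    (hsyS : ∀ u : X, sy u ∈ S)
    (hpolCont : ContinuousOn (fun q : X × P => pol q.1 q.2) (S ×ˢ Set.univ))
    (hsypol : ∀ u ∈ S, ∀ H : P,
      pol (sy u) H = sy u ∧ sy (pol u H) = sy u ∧ pol (pol u H) H = pol u H)
    (happrox : ∃ Hs : ℕ → P, ∀ u ∈ S,
      Filter.Tendsto (fun m => ι (List.foldl pol u ((List.range m).map Hs)))
        Filter.atTop (nhds (ι (sy u))))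
    (hpolContr : ∀ u ∈ S, ∀ v ∈ S, ∀ H : P, ‖ι (pol u H) - ι (pol v H)‖ ≤ ‖ι u - ι v‖)
    (Θ : X → X) (CΘ : ℝ) (hCΘ : 0 < CΘ)
    (hΘS : ∀ u : X, Θ u ∈ S) (hΘid : ∀ u ∈ S, Θ u = u)
    (hΘlip : ∀ u v : X, ‖ι (Θ u) - ι (Θ v)‖ ≤ CΘ * ‖ι u - ι v‖)
    (hpolext : ∀ u : X, ∀ H : P, pol u H = pol (Θ u) H)
    (hsyext : ∀ u : X, sy u = sy (Θ u))
    (m p : ℕ) (hp1 : 1 ≤ p) (hpm : p ≤ m)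
    (G : Fin m → X → ℝ) (hG : ∀ i, ContDiff ℝ 1 (G i))
    (𝒞 : Set X)
    (h𝒞 : 𝒞 = {u : X | ∀ i : Fin m, ((i : ℕ) < p → G i u = 0) ∧ ((p ≤ (i : ℕ)) → 0 ≤ G i u)})
    (f : X → ℝ) (hf : Differentiable ℝ f)
    (h𝒞ne : 𝒞.Nonempty) (hfbdd : BddBelow (f '' 𝒞))
    (hfS : ∀ u ∈ 𝒞, ∃ ξ ∈ 𝒞 ∩ S, f ξ ≤ f u)
    (hindep : ∀ u ∈ 𝒞,
      LinearIndependent ℝ (fun i : {i : Fin m // G i u = 0} => fderiv ℝ (G (i : Fin m)) u))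
    (hsymC : ∀ u ∈ 𝒞 ∩ S, ∀ H : P, pol u H ∈ 𝒞 ∧ f (pol u H) ≤ f u) :
    ∀ ε > (0:ℝ), ∃ uε ∈ 𝒞, ∃ lam : Fin m → ℝ,
      (∀ i : Fin m, p ≤ (i : ℕ) → 0 ≤ lam i) ∧
      (∀ i : Fin m, G i uε ≠ 0 → lam i = 0) ∧
      f uε ≤ sInf (f '' 𝒞) + ε ^ 2 ∧
      ‖ι uε - ι (sy uε)‖ < (K * (CΘ + 1) + 1) * ε ∧
      ‖fderiv ℝ f uε - ∑ i : Fin m, lam i • fderiv ℝ (G i) uε‖ ≤ ε := by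
  intro ε hεpos
  classical
  set ε' := ε / 2 with hε'def
  have hε'pos : 0 < ε' := by positivity
  -- 𝒞 is closed
  have h𝒞closed : IsClosed 𝒞 := by
    rw [h𝒞]
    have heq : {u : X | ∀ i : Fin m, ((i : ℕ) < p → G i u = 0) ∧ ((p ≤ (i : ℕ)) → 0 ≤ G i u)}
        = ⋂ i : Fin m, ({u : X | (i : ℕ) < p → G i u = 0} ∩ {u : X | p ≤ (i : ℕ) → 0 ≤ G i u}) := by
      ext u
      simp [Set.mem_iInter, Set.mem_setOf_eq, forall_and]
    rw [heq]
    apply isClosed_iInter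
    intro i
    apply IsClosed.inter
    · by_cases hip : (i : ℕ) < p
      · have : {u : X | (i : ℕ) < p → G i u = 0} = (G i) ⁻¹' {0} := by
          ext u; simp [hip]
        rw [this]
        exact isClosed_singleton.preimage (hG i).continuous
      · have : {u : X | (i : ℕ) < p → G i u = 0} = Set.univ := by
          ext u; simp [hip]
        rw [this]; exact isClosed_univ
    · by_cases hip : p ≤ (i : ℕ)
      · have : {u : X | p ≤ (i : ℕ) → 0 ≤ G i u} = (G i) ⁻¹' (Set.Ici 0) := by
          ext u; simp [hip]
        rw [this]
        exact isClosed_Ici.preimage (hG i).continuous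
      · have : {u : X | p ≤ (i : ℕ) → 0 ≤ G i u} = Set.univ := by
          ext u; simp [hip]
        rw [this]; exact isClosed_univ
  set c := sInf (f '' 𝒞) with hcdef
  -- pick near-minimizer
  obtain ⟨y0, ⟨u₀, hu₀𝒞, rfl⟩, hy0⟩ := exists_lt_of_csInf_lt (h𝒞ne.image f)
    (show c < c + ε' ^ 2 by nlinarith)
  obtain ⟨ξ, ⟨hξ𝒞, hξS⟩, hfξ⟩ := hfS u₀ hu₀𝒞
  obtain ⟨Hs, hHs⟩ := happrox
  -- polarization folds
  have hfold : ∀ (l : List P) (u : X), u ∈ 𝒞 → u ∈ S →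
      List.foldl pol u l ∈ 𝒞 ∧ List.foldl pol u l ∈ S ∧
        f (List.foldl pol u l) ≤ f u ∧ sy (List.foldl pol u l) = sy u := by
    intro l
    induction l with
    | nil => intro u h1 h2; exact ⟨h1, h2, le_rfl, rfl⟩
    | cons H l ih =>
      intro u hu𝒞 huS
      have h1 := hsymC u ⟨hu𝒞, huS⟩ H
      have h2 := hpolS u huS H
      have h3 := (hsypol u huS H).2.1
      obtain ⟨a1, a2, a3, a4⟩ := ih (pol u H) h1.1 h2
      exact ⟨a1, a2, le_trans a3 h1.2, by rw [List.foldl_cons, a4, h3]⟩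
  have hcontrfold : ∀ (l : List P) (u v : X), u ∈ S → v ∈ S →
      List.foldl pol u l ∈ S ∧ List.foldl pol v l ∈ S ∧
        ‖ι (List.foldl pol u l) - ι (List.foldl pol v l)‖ ≤ ‖ι u - ι v‖ := by
    intro l
    induction l with
    | nil => intro u v h1 h2; exact ⟨h1, h2, le_rfl⟩
    | cons H l ih =>
      intro u v huS hvS
      obtain ⟨a1, a2, a3⟩ := ih (pol u H) (pol v H) (hpolS u huS H) (hpolS v hvS H)
      exact ⟨a1, a2, le_trans a3 (hpolContr u huS v hvS H)⟩
  have hsyContr : ∀ u v : X, u ∈ S → v ∈ S → ‖ι (sy u) - ι (sy v)‖ ≤ ‖ι u - ι v‖ := by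
    intro u v huS hvS
    have h3 : Tendsto (fun k => ‖ι (List.foldl pol u ((List.range k).map Hs))
        - ι (List.foldl pol v ((List.range k).map Hs))‖) atTop (𝓝 ‖ι (sy u) - ι (sy v)‖) :=
      ((hHs u huS).sub (hHs v hvS)).norm
    exact le_of_tendsto h3 (Eventually.of_forall fun k =>
      (hcontrfold ((List.range k).map Hs) u v huS hvS).2.2)
  -- choose a good polarization iterate w
  obtain ⟨MM, hMM⟩ := (Metric.tendsto_atTop.mp (hHs ξ hξS)) ε' hε'pos
  set w := List.foldl pol ξ ((List.range MM).map Hs) with hwdef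
  obtain ⟨hw𝒞, hwS, hfw, hsyw⟩ := hfold ((List.range MM).map Hs) ξ hξ𝒞 hξS
  have hwsy : ‖ι w - ι (sy w)‖ < ε' := by
    rw [hsyw, ← dist_eq_norm]
    exact hMM MM le_rfl
  -- Ekeland on the subtype
  haveI hcs : CompleteSpace ↥𝒞 := h𝒞closed.completeSpace_coe
  set fc : ↥𝒞 → ℝ := fun x => f ↑x with hfcdef
  have hfccont : Continuous fc := hf.continuous.comp continuous_subtype_val
  have hrange : Set.range fc = f '' 𝒞 := by
    rw [hfcdef]
    rw [show (fun x : ↥𝒞 => f ↑x) = f ∘ (Subtype.val : ↥𝒞 → X) from rfl]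
    rw [Set.range_comp, Subtype.range_coe]
  have hbddc : BddBelow (Set.range fc) := hrange ▸ hfbdd
  have hwle : fc ⟨w, hw𝒞⟩ ≤ sInf (Set.range fc) + ε' ^ 2 := by
    rw [hrange, ← hcdef]
    have : f w ≤ f u₀ := le_trans hfw hfξ
    simp only [hfcdef]
    linarith
  obtain ⟨uc, hfu, hdu, hEk⟩ := my_ekeland fc hfccont hbddc
    (show (0:ℝ) < ε' ^ 2 by positivity) hε'pos ⟨w, hw𝒞⟩ hwle
  set uε := (uc : X) with huεdef
  have huε𝒞 : uε ∈ 𝒞 := uc.2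
  have hslope : ε' ^ 2 / ε' = ε' := by
    rw [sq]
    exact mul_div_cancel_right₀ ε' (ne_of_gt hε'pos)
  have hEk' : ∀ v ∈ 𝒞, f uε ≤ f v + ε' * ‖v - uε‖ := by
    intro v hv
    have h1 := hEk ⟨v, hv⟩
    rw [hslope, Subtype.dist_eq, dist_eq_norm] at h1
    exact h1
  have hduw : ‖uε - w‖ ≤ ε' := by
    have := hdu
    rwa [Subtype.dist_eq, dist_eq_norm] at this
  have hfuε : f uε ≤ f w := hfu
  -- membership conditions of uε
  have huεmem : ∀ i : Fin m, ((i : ℕ) < p → G i uε = 0) ∧ ((p ≤ (i : ℕ)) → 0 ≤ G i uε) := by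
    have := huε𝒞
    rw [h𝒞] at this
    exact this
  -- the active index type
  set Idx := {i : Fin m // G i uε = 0} with hIdx
  set L : Idx → X →L[ℝ] ℝ := fun i => fderiv ℝ (G i.1) uε with hLdef
  have hLind : LinearIndependent ℝ L := hindep uε huε𝒞
  obtain ⟨R, hR⟩ := exists_dual_family L hLind
  -- cone inequality via the curve lemma
  have hcone : ∀ h : X, (∀ i : Idx, ¬ (p ≤ ((i : Fin m) : ℕ)) → L i h = 0) →
      (∀ i : Idx, (p ≤ ((i : Fin m) : ℕ)) → 0 ≤ L i h) → -(ε' * ‖h‖) ≤ fderiv ℝ f uε h := by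
    intro h hEqc hIneqc
    obtain ⟨u, hu0, hud, huΦ⟩ := curve_exists (fun i : Idx => G i.1) (fun i => hG i.1)
      uε (fun i => i.2) R hR h
    have hin : ∀ᶠ t in 𝓝 (0:ℝ), ∀ i : Fin m, G i uε ≠ 0 → 0 < G i (u t) := by
      rw [eventually_all]
      intro i
      by_cases hi : G i uε = 0
      · exact Eventually.of_forall (fun t h' => absurd hi h')
      · have hpos : 0 < G i uε := by
          rcases Nat.lt_or_ge (i : ℕ) p with hip | hip
          · exact absurd ((huεmem i).1 hip) hi
          · exact lt_of_le_of_ne ((huεmem i).2 hip) (Ne.symm hi)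
        have hcontat : ContinuousAt (fun t => G i (u t)) 0 :=
          ((hG i).continuous.continuousAt).comp hud.continuousAt
        have : Tendsto (fun t => G i (u t)) (𝓝 0) (𝓝 (G i uε)) := by
          have := hcontat.tendsto
          rwa [hu0] at this
        exact this.eventually (eventually_gt_nhds hpos) |>.mono (fun t ht _ => ht)
    have hmem : ∀ᶠ t in 𝓝[>] (0:ℝ), u t ∈ 𝒞 := by
      filter_upwards [(hin.and huΦ).filter_mono nhdsWithin_le_nhds, self_mem_nhdsWithin]
        with t ht htpos
      obtain ⟨hin_t, hΦ_t⟩ := ht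
      rw [h𝒞]
      intro i
      constructor
      · intro hip
        have hi0 : G i uε = 0 := (huεmem i).1 hip
        have := hΦ_t ⟨i, hi0⟩
        rw [this, hEqc ⟨i, hi0⟩ (by exact not_le.mpr hip), mul_zero]
      · intro hpi
        by_cases hi : G i uε = 0
        · rw [hΦ_t ⟨i, hi⟩]
          exact mul_nonneg (le_of_lt htpos) (hIneqc ⟨i, hi⟩ hpi)
        · exact le_of_lt (hin_t i hi)
    have hq : ∀ᶠ t in 𝓝[>] (0:ℝ),
        0 ≤ (f (u t) - f (u 0)) * t⁻¹ + ε' * ‖t⁻¹ • (u t - u 0)‖ := by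
      filter_upwards [hmem, self_mem_nhdsWithin] with t ht htpos
      have h1 := hEk' (u t) ht
      rw [hu0]
      rw [norm_smul, Real.norm_eq_abs, abs_of_pos (inv_pos.mpr htpos)]
      nlinarith [mul_nonneg (inv_pos.mpr htpos).le
        (show (0:ℝ) ≤ f (u t) + ε' * ‖u t - uε‖ - f uε by linarith)]
    have hfd : HasDerivAt (fun t => f (u t)) (fderiv ℝ f uε h) 0 := by
      have h1 : HasFDerivAt f (fderiv ℝ f uε) (u 0) := by
        rw [hu0]; exact (hf uε).hasFDerivAt
      exact h1.comp_hasDerivAt 0 hud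
    have hmono : 𝓝[>] (0:ℝ) ≤ 𝓝[≠] (0:ℝ) :=
      nhdsWithin_mono 0 (fun x hx => ne_of_gt hx)
    have hsf : Tendsto (fun t => (f (u t) - f (u 0)) * t⁻¹) (𝓝[>] (0:ℝ))
        (𝓝 (fderiv ℝ f uε h)) := by
      have h1 := (hasDerivAt_iff_tendsto_slope.mp hfd).mono_left hmono
      apply h1.congr
      intro t
      rw [slope_def_field]
      field_simp
      rw [sub_zero]
    have hsu : Tendsto (fun t => ‖t⁻¹ • (u t - u 0)‖) (𝓝[>] (0:ℝ)) (𝓝 ‖h‖) := by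
      have h1 := (hasDerivAt_iff_tendsto_slope.mp hud).mono_left hmono
      have h2 : Tendsto (fun t => t⁻¹ • (u t - u 0)) (𝓝[>] (0:ℝ)) (𝓝 h) := by
        apply h1.congr
        intro t
        rw [slope, vsub_eq_sub, sub_zero]
      exact h2.norm
    have hlim : Tendsto (fun t => (f (u t) - f (u 0)) * t⁻¹ + ε' * ‖t⁻¹ • (u t - u 0)‖)
        (𝓝[>] (0:ℝ)) (𝓝 (fderiv ℝ f uε h + ε' * ‖h‖)) := hsf.add (hsu.const_mul ε')
    have hfin : 0 ≤ fderiv ℝ f uε h + ε' * ‖h‖ := ge_of_tendsto hlim hq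
    linarith
  -- apply the Farkas lemma
  obtain ⟨lam', hlam'A, hlam'norm⟩ := farkas_eps L R hR (fderiv ℝ f uε)
    (fun i : Idx => p ≤ ((i : Fin m) : ℕ)) (le_of_lt hε'pos)
    (show ε' < ε by rw [hε'def]; linarith) hcone
  set lam : Fin m → ℝ := fun i => if hi : G i uε = 0 then lam' ⟨i, hi⟩ else 0 with hlamdef
  have hsum : ∑ i : Idx, lam' i • L i = ∑ i : Fin m, lam i • fderiv ℝ (G i) uε := by
    have h1 : ∑ i : Idx, lam' i • L i
        = ∑ i : Idx, lam i.1 • fderiv ℝ (G i.1) uε := by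
      apply Finset.sum_congr rfl
      intro i _
      rw [hlamdef]
      simp only [i.2, dif_pos]
      rfl
    rw [h1]
    rw [← Finset.sum_subtype (Finset.univ.filter (fun i : Fin m => G i uε = 0))
      (by intro x; simp) (fun i => lam i • fderiv ℝ (G i) uε)]
    apply Finset.sum_subset (Finset.filter_subset _ _)
    intro x _ hx
    rw [Finset.mem_filter] at hx
    push_neg at hx
    have : lam x = 0 := by
      rw [hlamdef]
      exact dif_neg (hx (Finset.mem_univ x))
    rw [this, zero_smul]
  refine ⟨uε, huε𝒞, lam, ?_, ?_, ?_, ?_, ?_⟩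
  · intro i hpi
    by_cases hi : G i uε = 0
    · rw [hlamdef]
      simp only [hi, dif_pos]
      exact hlam'A ⟨i, hi⟩ hpi
    · rw [hlamdef]
      simp only [hi, dif_neg, not_false_iff, le_refl]
  · intro i hne
    rw [hlamdef]
    exact dif_neg hne
  · have h1 : f uε ≤ f u₀ := le_trans hfuε (le_trans hfw hfξ)
    have h2 : ε' ^ 2 ≤ ε ^ 2 := by
      rw [hε'def]
      nlinarith
    linarith
  · have htri : ‖ι uε - ι (sy uε)‖ ≤ ‖ι uε - ι w‖ + ‖ι w - ι (sy w)‖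
        + ‖ι (sy w) - ι (sy uε)‖ := by
      have heq : ι uε - ι (sy uε) = (ι uε - ι w) + (ι w - ι (sy w)) + (ι (sy w) - ι (sy uε)) := by
        abel
      rw [heq]
      exact le_trans (norm_add_le _ _) (by gcongr; exact norm_add_le _ _)
    have h1 : ‖ι uε - ι w‖ ≤ K * ε' := by
      rw [← map_sub]
      exact le_trans (hιK (uε - w)) (by nlinarith)
    have h2 : ‖ι (sy w) - ι (sy uε)‖ ≤ CΘ * (K * ε') := by
      rw [hsyext w, hsyext uε]
      apply le_trans (hsyContr (Θ w) (Θ uε) (hΘS w) (hΘS uε))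
      apply le_trans (hΘlip w uε)
      have : ‖ι w - ι uε‖ ≤ K * ε' := by
        rw [← map_sub]
        apply le_trans (hιK (w - uε))
        rw [norm_sub_rev uε w] at hduw
        nlinarith
      nlinarith
    have hKpos : (0:ℝ) < K * (CΘ + 1) + 1 := by positivity
    have : ‖ι uε - ι (sy uε)‖ < (K * (CΘ + 1) + 1) * ε' := by
      calc ‖ι uε - ι (sy uε)‖ ≤ ‖ι uε - ι w‖ + ‖ι w - ι (sy w)‖ + ‖ι (sy w) - ι (sy uε)‖ := htri
        _ < K * ε' + ε' + CΘ * (K * ε') := by linarith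
        _ = (K * (CΘ + 1) + 1) * ε' := by ring
    apply lt_of_lt_of_le this
    rw [hε'def]
    nlinarith
  · rw [← hsum]
    exact hlam'norm
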